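/- Let R and S be semirings. A right congruence ρ on R × S is an m-regular right congruence if and only if ρ = σ × ∇_S for some m-regular right congruence σ on R, or ρ = ∇_R × δ for some m-regular right congruence δ on S. -/

import Mathlib

universe u

section Defs

variable (S : Type u) [NonUnitalSemiring S]

structure IsRightAction (M : Type u) [AddCommMonoid M] (act : M → S → M) : Prop where
  add_act : ∀ (m₁ m₂ : M) (s : S), act (m₁ + m₂) s = act m₁ s + act m₂ s
  act_add : ∀ (m : M) (s₁ s₂ : S), act m (s₁ + s₂) = act m s₁ + act m s₂
  act_mul : ∀ (m : M) (s₁ s₂ : S), act m (s₁ * s₂) = act (act m s₁) s₂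
  act_zero : ∀ m : M, act m (0 : S) = 0
  zero_act : ∀ s : S, act (0 : M) s = 0

def IsSubsemimodule (M : Type u) [AddCommMonoid M] (act : M → S → M) (N : Set M) : Prop :=
  (0 : M) ∈ N ∧ (∀ x ∈ N, ∀ y ∈ N, x + y ∈ N) ∧ (∀ x ∈ N, ∀ s : S, act x s ∈ N)

def IsMinimal (M : Type u) [AddCommMonoid M] (act : M → S → M) : Prop :=
  (∃ (m : M) (s : S), act m s ≠ 0) ∧
    ∀ N : Set M, IsSubsemimodule S M act N → N = {(0 : M)} ∨ N = Set.univ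

def IsSemimoduleCong (M : Type u) [AddCommMonoid M] (act : M → S → M)
    (r : M → M → Prop) : Prop :=
  Equivalence r ∧ (∀ a b c : M, r a b → r (a + c) (b + c)) ∧
    (∀ (a b : M) (s : S), r a b → r (act a s) (act b s))

def IsSimple (M : Type u) [AddCommMonoid M] (act : M → S → M) : Prop :=
  IsMinimal S M act ∧ ∀ r : M → M → Prop, IsSemimoduleCong S M act r →
    (∀ a b, r a b → a = b) ∨ (∀ a b, r a b)

def IsRightCongruence (ρ : S → S → Prop) : Prop :=
  Equivalence ρ ∧ (∀ a b c : S, ρ a b → ρ (a + c) (b + c)) ∧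
    (∀ a b c : S, ρ a b → ρ (a * c) (b * c))

def IsCongruence (ρ : S → S → Prop) : Prop :=
  IsRightCongruence S ρ ∧ ∀ a b c : S, ρ a b → ρ (c * a) (c * b)

def IsRegularCong (ρ : S → S → Prop) : Prop := ∃ e : S, ∀ s : S, ρ (e * s) s

def IsRightIdeal (I : Set S) : Prop :=
  (0 : S) ∈ I ∧ (∀ x ∈ I, ∀ y ∈ I, x + y ∈ I) ∧ ∀ x ∈ I, ∀ s : S, x * s ∈ I

def IsSaturated (ρ : S → S → Prop) (I : Set S) : Prop := ∀ s i : S, i ∈ I → ρ s i → s ∈ I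

def IsMaximalSaturatedRightIdeal (ρ : S → S → Prop) (I : Set S) : Prop :=
  IsRightIdeal S I ∧ IsSaturated S ρ I ∧ I ≠ Set.univ ∧
    ∀ J : Set S, IsRightIdeal S J → IsSaturated S ρ J → I ⊆ J → J = I ∨ J = Set.univ

def zeroClass (ρ : S → S → Prop) : Set S := {s : S | ρ s 0}

def IsMRegular (ρ : S → S → Prop) : Prop :=
  IsRightCongruence S ρ ∧ IsRegularCong S ρ ∧
    IsMaximalSaturatedRightIdeal S ρ (zeroClass S ρ)

def IsMaximalRightCongruence (ρ : S → S → Prop) : Prop :=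
  IsRightCongruence S ρ ∧ (∃ a b : S, ¬ ρ a b) ∧
    ∀ τ : S → S → Prop, IsRightCongruence S τ → (∀ a b, ρ a b → τ a b) →
      (∀ a b, τ a b ↔ ρ a b) ∨ (∀ a b, τ a b)

/-- `φ : S → M` realizes `M` as the quotient right `S`-semimodule `S/μ`. -/
def IsQuotientModel (μ : S → S → Prop) (M : Type u) [AddCommMonoid M]
    (act : M → S → M) (φ : S → M) : Prop :=
  Function.Surjective φ ∧ (∀ a b : S, φ (a + b) = φ a + φ b) ∧ φ 0 = 0 ∧
    (∀ (a : S) (s : S), φ (a * s) = act (φ a) s) ∧ ∀ a b : S, φ a = φ b ↔ μ a b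

end Defs


section Helpers

variable {R S : Type u} [NonUnitalSemiring R] [NonUnitalSemiring S]

private lemma zc_ideal {T : Type u} [NonUnitalSemiring T] {t : T → T → Prop}
    (h : IsRightCongruence T t) : IsRightIdeal T (zeroClass T t) := by
  refine ⟨h.1.refl 0, ?_, ?_⟩
  · intro x hx y hy
    have h1 := h.2.1 x 0 y hx
    rw [zero_add] at h1
    exact h.1.trans h1 hy
  · intro x hx s
    have h1 := h.2.2 x 0 s hx
    rwa [zero_mul] at h1

private lemma zc_sat {T : Type u} [NonUnitalSemiring T] {t : T → T → Prop}
    (h : IsRightCongruence T t) : IsSaturated T t (zeroClass T t) :=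
  fun _ _ hi hsi => h.1.trans hsi hi

private lemma transfer_left (ρ : R × S → R × S → Prop) (σ : R → R → Prop)
    (hρ : IsRightCongruence (R × S) ρ) (hσ : IsRightCongruence R σ)
    (hiff : ∀ p q : R × S, ρ p q ↔ σ p.1 q.1) :
    IsMRegular (R × S) ρ ↔ IsMRegular R σ := by
  have hmemZ : ∀ p : R × S, p ∈ zeroClass (R × S) ρ ↔ σ p.1 0 := by
    intro p; exact hiff p 0
  constructor
  · rintro ⟨-, ⟨e, he⟩, hZid, hZsat, hZne, hZmax⟩
    refine ⟨hσ, ⟨e.1, fun r => ?_⟩, zc_ideal hσ, zc_sat hσ, ?_, ?_⟩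
    · have := (hiff _ _).mp (he (r, 0))
      simpa using this
    · intro hu
      apply hZne
      apply Set.eq_univ_iff_forall.mpr
      intro p
      rw [hmemZ]
      have : p.1 ∈ (Set.univ : Set R) := Set.mem_univ _
      rw [← hu] at this
      exact this
    · intro I hIid hIsat hIsub
      set J : Set (R × S) := {p | p.1 ∈ I} with hJ
      have hJid : IsRightIdeal (R × S) J := by
        refine ⟨hIid.1, ?_, ?_⟩
        · intro x hx y hy; exact hIid.2.1 x.1 hx y.1 hy
        · intro x hx s; exact hIid.2.2 x.1 hx s.1
      have hJsat : IsSaturated (R × S) ρ J := by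
        intro p q hq hpq
        exact hIsat p.1 q.1 hq ((hiff p q).mp hpq)
      have hJsub : zeroClass (R × S) ρ ⊆ J := by
        intro p hp
        exact hIsub ((hmemZ p).mp hp)
      rcases hZmax J hJid hJsat hJsub with h | h
      · left
        ext r
        constructor
        · intro hr
          have : (r, (0 : S)) ∈ J := hr
          rw [h] at this
          exact (hmemZ (r, 0)).mp this
        · intro hr; exact hIsub hr
      · right
        apply Set.eq_univ_iff_forall.mpr
        intro r
        have : ((r, (0 : S)) : R × S) ∈ J := by rw [h]; trivial
        exact this
  · rintro ⟨-, ⟨e1, he⟩, hZid, hZsat, hZne, hZmax⟩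
    refine ⟨hρ, ⟨(e1, 0), fun p => ?_⟩, zc_ideal hρ, zc_sat hρ, ?_, ?_⟩
    · rw [hiff]; simpa using he p.1
    · intro hu
      apply hZne
      apply Set.eq_univ_iff_forall.mpr
      intro r
      have : ((r, (0 : S)) : R × S) ∈ Set.univ := Set.mem_univ _
      rw [← hu] at this
      exact (hmemZ (r, 0)).mp this
    · intro J hJid hJsat hJsub
      have hJtr : ∀ r : R, ∀ s : S, ((r, s) : R × S) ∈ J ↔ ((r, (0 : S)) : R × S) ∈ J := by
        intro r s
        have h1 : ρ (r, s) (r, 0) := (hiff _ _).mpr (hσ.1.refl r)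
        have h2 : ρ (r, 0) (r, s) := hρ.1.symm h1
        exact ⟨fun h => hJsat _ _ h h2, fun h => hJsat _ _ h h1⟩
      set I : Set R := {r | ((r, (0 : S)) : R × S) ∈ J} with hI
      have hIid : IsRightIdeal R I := by
        refine ⟨?_, ?_, ?_⟩
        · have := hJid.1; simpa [hI, Prod.mk_zero_zero] using this
        · intro x hx y hy
          have := hJid.2.1 _ hx _ hy
          simpa [hI] using this
        · intro x hx s
          have := hJid.2.2 _ hx ((s, 0) : R × S)
          simpa [hI] using this
      have hIsat : IsSaturated R σ I := by
        intro r q hq hrq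
        exact hJsat (r, 0) (q, 0) hq ((hiff _ _).mpr hrq)
      have hIsub : zeroClass R σ ⊆ I := by
        intro r hr
        exact hJsub ((hmemZ (r, 0)).mpr hr)
      rcases hZmax I hIid hIsat hIsub with h | h
      · left
        ext p
        obtain ⟨r, s⟩ := p
        rw [hJtr r s]
        constructor
        · intro hr
          have : r ∈ I := hr
          rw [h] at this
          exact (hmemZ (r, s)).mpr this
        · intro hp
          exact hJsub ((hmemZ (r, 0)).mpr ((hmemZ (r, s)).mp hp))
      · right
        apply Set.eq_univ_iff_forall.mpr
        intro p
        obtain ⟨r, s⟩ := p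
        rw [hJtr r s]
        have : r ∈ I := by rw [h]; trivial
        exact this

private lemma transfer_right (ρ : R × S → R × S → Prop) (δ : S → S → Prop)
    (hρ : IsRightCongruence (R × S) ρ) (hδ : IsRightCongruence S δ)
    (hiff : ∀ p q : R × S, ρ p q ↔ δ p.2 q.2) :
    IsMRegular (R × S) ρ ↔ IsMRegular S δ := by
  have hmemZ : ∀ p : R × S, p ∈ zeroClass (R × S) ρ ↔ δ p.2 0 := by
    intro p; exact hiff p 0
  constructor
  · rintro ⟨-, ⟨e, he⟩, hZid, hZsat, hZne, hZmax⟩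
    refine ⟨hδ, ⟨e.2, fun s => ?_⟩, zc_ideal hδ, zc_sat hδ, ?_, ?_⟩
    · have := (hiff _ _).mp (he (0, s))
      simpa using this
    · intro hu
      apply hZne
      apply Set.eq_univ_iff_forall.mpr
      intro p
      rw [hmemZ]
      have : p.2 ∈ (Set.univ : Set S) := Set.mem_univ _
      rw [← hu] at this
      exact this
    · intro I hIid hIsat hIsub
      set J : Set (R × S) := {p | p.2 ∈ I} with hJ
      have hJid : IsRightIdeal (R × S) J := by
        refine ⟨hIid.1, ?_, ?_⟩
        · intro x hx y hy; exact hIid.2.1 x.2 hx y.2 hy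
        · intro x hx s; exact hIid.2.2 x.2 hx s.2
      have hJsat : IsSaturated (R × S) ρ J := by
        intro p q hq hpq
        exact hIsat p.2 q.2 hq ((hiff p q).mp hpq)
      have hJsub : zeroClass (R × S) ρ ⊆ J := by
        intro p hp
        exact hIsub ((hmemZ p).mp hp)
      rcases hZmax J hJid hJsat hJsub with h | h
      · left
        ext s
        constructor
        · intro hs
          have : (((0 : R), s) : R × S) ∈ J := hs
          rw [h] at this
          exact (hmemZ (0, s)).mp this
        · intro hs; exact hIsub hs
      · right
        apply Set.eq_univ_iff_forall.mpr
        intro s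
        have : (((0 : R), s) : R × S) ∈ J := by rw [h]; trivial
        exact this
  · rintro ⟨-, ⟨e2, he⟩, hZid, hZsat, hZne, hZmax⟩
    refine ⟨hρ, ⟨(0, e2), fun p => ?_⟩, zc_ideal hρ, zc_sat hρ, ?_, ?_⟩
    · rw [hiff]; simpa using he p.2
    · intro hu
      apply hZne
      apply Set.eq_univ_iff_forall.mpr
      intro s
      have : (((0 : R), s) : R × S) ∈ Set.univ := Set.mem_univ _
      rw [← hu] at this
      exact (hmemZ (0, s)).mp this
    · intro J hJid hJsat hJsub
      have hJtr : ∀ r : R, ∀ s : S, ((r, s) : R × S) ∈ J ↔ (((0 : R), s) : R × S) ∈ J := by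
        intro r s
        have h1 : ρ (r, s) (0, s) := (hiff _ _).mpr (hδ.1.refl s)
        have h2 : ρ (0, s) (r, s) := hρ.1.symm h1
        exact ⟨fun h => hJsat _ _ h h2, fun h => hJsat _ _ h h1⟩
      set I : Set S := {s | (((0 : R), s) : R × S) ∈ J} with hI
      have hIid : IsRightIdeal S I := by
        refine ⟨?_, ?_, ?_⟩
        · have := hJid.1; simpa [hI, Prod.mk_zero_zero] using this
        · intro x hx y hy
          have := hJid.2.1 _ hx _ hy
          simpa [hI] using this
        · intro x hx s
          have := hJid.2.2 _ hx ((0, s) : R × S)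
          simpa [hI] using this
      have hIsat : IsSaturated S δ I := by
        intro s q hq hsq
        exact hJsat (0, s) (0, q) hq ((hiff _ _).mpr hsq)
      have hIsub : zeroClass S δ ⊆ I := by
        intro s hs
        exact hJsub ((hmemZ (0, s)).mpr hs)
      rcases hZmax I hIid hIsat hIsub with h | h
      · left
        ext p
        obtain ⟨r, s⟩ := p
        rw [hJtr r s]
        constructor
        · intro hs
          have : s ∈ I := hs
          rw [h] at this
          exact (hmemZ (r, s)).mpr this
        · intro hp
          exact hJsub ((hmemZ (0, s)).mpr ((hmemZ (r, s)).mp hp))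
      · right
        apply Set.eq_univ_iff_forall.mpr
        intro p
        obtain ⟨r, s⟩ := p
        rw [hJtr r s]
        have : s ∈ I := by rw [h]; trivial
        exact this

end Helpers

/-- A right congruence `ρ` on `R × S` is m-regular iff
`ρ = σ × ∇_S` for some m-regular right congruence `σ` on `R`, or
`ρ = ∇_R × δ` for some m-regular right congruence `δ` on `S`. -/
theorem mRegular_on_prod_iff {R S : Type u} [NonUnitalSemiring R] [NonUnitalSemiring S]
    (ρ : R × S → R × S → Prop) (hcong : IsRightCongruence (R × S) ρ) :
    IsMRegular (R × S) ρ ↔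
      ((∃ σ : R → R → Prop, IsMRegular R σ ∧
          ∀ p q : R × S, ρ p q ↔ σ p.1 q.1) ∨
       (∃ δ : S → S → Prop, IsMRegular S δ ∧
          ∀ p q : R × S, ρ p q ↔ δ p.2 q.2)) := by
  constructor
  · rintro hm
    obtain ⟨-, ⟨e, he⟩, hZid, hZsat, hZne, hZmax⟩ := hm
    set Z := zeroClass (R × S) ρ with hZ
    -- the saturated right ideal generated by Z ∪ ({0} × S)
    set J : Set (R × S) := {p | ∃ z ∈ Z, ∃ s : S, ρ p (z + ((0 : R), s))} with hJdef
    have hJid : IsRightIdeal (R × S) J := by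
      refine ⟨⟨0, hZid.1, 0, by simpa [Prod.mk_zero_zero] using hcong.1.refl 0⟩, ?_, ?_⟩
      · rintro x ⟨z, hz, s, hx⟩ y ⟨z', hz', s', hy⟩
        refine ⟨z + z', hZid.2.1 z hz z' hz', s + s', ?_⟩
        have h1 := hcong.2.1 _ _ y hx
        have h2 := hcong.2.1 _ _ (z + ((0 : R), s)) hy
        have h3 : z' + ((0 : R), s') + (z + ((0 : R), s)) = z + z' + ((0 : R), s + s') := by
          obtain ⟨z1, z2⟩ := z; obtain ⟨z1', z2'⟩ := z'
          simp [Prod.ext_iff]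
          constructor <;> abel
        rw [h3] at h2
        have h4 : z + ((0 : R), s) + y = y + (z + ((0 : R), s)) := add_comm _ _
        rw [h4] at h1
        exact hcong.1.trans h1 h2
      · rintro x ⟨z, hz, s, hx⟩ q
        refine ⟨z * q, hZid.2.2 z hz q, s * q.2, ?_⟩
        have h1 := hcong.2.2 _ _ q hx
        have h2 : (z + ((0 : R), s)) * q = z * q + ((0 : R), s * q.2) := by
          rw [add_mul]
          simp [Prod.ext_iff]
        rwa [h2] at h1
    have hJsat : IsSaturated (R × S) ρ J := by
      rintro p q ⟨z, hz, s, hq⟩ hpq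
      exact ⟨z, hz, s, hcong.1.trans hpq hq⟩
    have hJsub : Z ⊆ J := fun p hp => ⟨p, hp, 0, by simpa [Prod.mk_zero_zero] using hcong.1.refl p⟩
    -- the saturated right ideal generated by Z ∪ (R × {0})
    set K : Set (R × S) := {p | ∃ z ∈ Z, ∃ r : R, ρ p (z + (r, (0 : S)))} with hKdef
    have hKid : IsRightIdeal (R × S) K := by
      refine ⟨⟨0, hZid.1, 0, by simpa [Prod.mk_zero_zero] using hcong.1.refl 0⟩, ?_, ?_⟩
      · rintro x ⟨z, hz, r, hx⟩ y ⟨z', hz', r', hy⟩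
        refine ⟨z + z', hZid.2.1 z hz z' hz', r + r', ?_⟩
        have h1 := hcong.2.1 _ _ y hx
        have h2 := hcong.2.1 _ _ (z + ((r : R), (0 : S))) hy
        have h3 : z' + ((r' : R), (0 : S)) + (z + (r, (0 : S))) = z + z' + (r + r', (0 : S)) := by
          obtain ⟨z1, z2⟩ := z; obtain ⟨z1', z2'⟩ := z'
          simp [Prod.ext_iff]
          constructor <;> abel
        rw [h3] at h2
        have h4 : z + ((r : R), (0 : S)) + y = y + (z + (r, (0 : S))) := add_comm _ _
        rw [h4] at h1
        exact hcong.1.trans h1 h2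
      · rintro x ⟨z, hz, r, hx⟩ q
        refine ⟨z * q, hZid.2.2 z hz q, r * q.1, ?_⟩
        have h1 := hcong.2.2 _ _ q hx
        have h2 : (z + ((r : R), (0 : S))) * q = z * q + (r * q.1, (0 : S)) := by
          rw [add_mul]
          simp [Prod.ext_iff]
        rwa [h2] at h1
    have hKsat : IsSaturated (R × S) ρ K := by
      rintro p q ⟨z, hz, r, hq⟩ hpq
      exact ⟨z, hz, r, hcong.1.trans hpq hq⟩
    have hKsub : Z ⊆ K := fun p hp => ⟨p, hp, 0, by simpa [Prod.mk_zero_zero] using hcong.1.refl p⟩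
    rcases hZmax J hJid hJsat hJsub with hJZ | hJU
    · -- {0} × S ⊆ Z : left factor case
      have h0S : ∀ s : S, (((0 : R), s) : R × S) ∈ Z := by
        intro s
        have : (((0 : R), s) : R × S) ∈ J :=
          ⟨0, hZid.1, s, by simpa using hcong.1.refl ((0 : R), s)⟩
        rwa [hJZ] at this
      have hsplit : ∀ (r : R) (s : S), ρ (r, s) (r, 0) := by
        intro r s
        have h1 := hcong.2.1 _ _ ((r, (0 : S)) : R × S) (h0S s)
        simpa using h1
      set σ : R → R → Prop := fun a b => ρ (a, 0) (b, 0) with hσdef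
      have hiff : ∀ p q : R × S, ρ p q ↔ σ p.1 q.1 := by
        intro p q
        constructor
        · intro h
          exact hcong.1.trans (hcong.1.trans (hcong.1.symm (hsplit p.1 p.2)) h)
            (hsplit q.1 q.2)
        · intro h
          exact hcong.1.trans (hcong.1.trans (hsplit p.1 p.2) h)
            (hcong.1.symm (hsplit q.1 q.2))
      have hσ : IsRightCongruence R σ := by
        refine ⟨⟨fun a => hcong.1.refl _, fun h => hcong.1.symm h,
          fun h1 h2 => hcong.1.trans h1 h2⟩, ?_, ?_⟩
        · intro a b c h
          have := hcong.2.1 _ _ ((c, (0 : S)) : R × S) h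
          simpa [hσdef] using this
        · intro a b c h
          have := hcong.2.2 _ _ ((c, (0 : S)) : R × S) h
          simpa [hσdef] using this
      refine Or.inl ⟨σ, ?_, hiff⟩
      exact (transfer_left ρ σ hcong hσ hiff).mp ⟨hcong, ⟨e, he⟩, hZid, hZsat, hZne, hZmax⟩
    rcases hZmax K hKid hKsat hKsub with hKZ | hKU
    · -- R × {0} ⊆ Z : right factor case
      have hR0 : ∀ r : R, ((r, (0 : S)) : R × S) ∈ Z := by
        intro r
        have : ((r, (0 : S)) : R × S) ∈ K :=
          ⟨0, hZid.1, r, by simpa using hcong.1.refl ((r : R), (0 : S))⟩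
        rwa [hKZ] at this
      have hsplit : ∀ (r : R) (s : S), ρ (r, s) (0, s) := by
        intro r s
        have h1 := hcong.2.1 _ _ (((0 : R), s) : R × S) (hR0 r)
        simpa using h1
      set δ : S → S → Prop := fun a b => ρ (0, a) (0, b) with hδdef
      have hiff : ∀ p q : R × S, ρ p q ↔ δ p.2 q.2 := by
        intro p q
        constructor
        · intro h
          exact hcong.1.trans (hcong.1.trans (hcong.1.symm (hsplit p.1 p.2)) h)
            (hsplit q.1 q.2)
        · intro h
          exact hcong.1.trans (hcong.1.trans (hsplit p.1 p.2) h)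
            (hcong.1.symm (hsplit q.1 q.2))
      have hδ : IsRightCongruence S δ := by
        refine ⟨⟨fun a => hcong.1.refl _, fun h => hcong.1.symm h,
          fun h1 h2 => hcong.1.trans h1 h2⟩, ?_, ?_⟩
        · intro a b c h
          have := hcong.2.1 _ _ (((0 : R), c) : R × S) h
          simpa [hδdef] using this
        · intro a b c h
          have := hcong.2.2 _ _ (((0 : R), c) : R × S) h
          simpa [hδdef] using this
      refine Or.inr ⟨δ, ?_, hiff⟩
      exact (transfer_right ρ δ hcong hδ hiff).mp ⟨hcong, ⟨e, he⟩, hZid, hZsat, hZne, hZmax⟩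
    · -- both J and K are everything : contradiction
      exfalso
      apply hZne
      have fact1 : ∀ r t : R, ((r * t, (0 : S)) : R × S) ∈ Z := by
        intro r t
        have hrJ : ((r, (0 : S)) : R × S) ∈ J := by rw [hJU]; trivial
        obtain ⟨z, hz, s', hrel⟩ := hrJ
        obtain ⟨z1, z2⟩ := z
        have h1 := hcong.2.2 _ _ ((t, (0 : S)) : R × S) hrel
        have h2 : ((z1, z2) + ((0 : R), s')) * (t, (0 : S)) = ((z1 * t, (0 : S)) : R × S) := by
          simp [Prod.ext_iff]
        have h3 : ((r, (0 : S)) : R × S) * (t, 0) = (r * t, (0 : S)) := by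
          simp [Prod.ext_iff]
        rw [h2, h3] at h1
        have hmem : ((z1 * t, (0 : S)) : R × S) ∈ Z := by
          have := hZid.2.2 (z1, z2) hz ((t, (0 : S)) : R × S)
          simpa using this
        exact hZsat _ _ hmem h1
      have fact2 : ∀ s u : S, (((0 : R), s * u) : R × S) ∈ Z := by
        intro s u
        have hsK : (((0 : R), s) : R × S) ∈ K := by rw [hKU]; trivial
        obtain ⟨z, hz, r', hrel⟩ := hsK
        obtain ⟨z1, z2⟩ := z
        have h1 := hcong.2.2 _ _ (((0 : R), u) : R × S) hrel
        have h2 : ((z1, z2) + ((r' : R), (0 : S))) * ((0 : R), u) = (((0 : R), z2 * u) : R × S) := by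
          simp [Prod.ext_iff]
        have h3 : (((0 : R), s) : R × S) * (0, u) = ((0 : R), s * u) := by
          simp [Prod.ext_iff]
        rw [h2, h3] at h1
        have hmem : (((0 : R), z2 * u) : R × S) ∈ Z := by
          have := hZid.2.2 (z1, z2) hz (((0 : R), u) : R × S)
          simpa using this
        exact hZsat _ _ hmem h1
      apply Set.eq_univ_iff_forall.mpr
      intro p
      have hep : e * p ∈ Z := by
        have h1 : e * p = ((e.1 * p.1, (0 : S)) : R × S) + ((0 : R), e.2 * p.2) := by
          simp [Prod.ext_iff]
        rw [h1]
        exact hZid.2.1 _ (fact1 e.1 p.1) _ (fact2 e.2 p.2)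
      exact hZsat p (e * p) hep (hcong.1.symm (he p))
  · rintro (⟨σ, hσm, hiff⟩ | ⟨δ, hδm, hiff⟩)
    · exact (transfer_left ρ σ hcong hσm.1 hiff).mpr hσm
    · exact (transfer_right ρ δ hcong hδm.1 hiff).mpr hδm
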